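/- For all natural numbers k and all real x, (k+1) * (∑_{i=0}^{k} (-1)^i C(k,i)(x-i)^k - ∑_{i=0}^{k} (-1)^i C(k,i)(x-1-i)^k) = 0, i.e., the derivative of f_{k+1} at x equals (k+1)(f_k(x) - f_k(x-1)). -/

import Mathlib

theorem stmt14 (k : ℕ) (x : ℝ) :
    deriv (fun y : ℝ => ∑ i ∈ Finset.range (k+2), (-1:ℝ)^i * ((k+1).choose i) * (y - i)^(k+1)) x
      = (k+1) * ((∑ i ∈ Finset.range (k+1), (-1:ℝ)^i * (k.choose i) * (x - i)^k)
        - ∑ i ∈ Finset.range (k+1), (-1:ℝ)^i * (k.choose i) * (x - 1 - i)^k) := by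
  have hd : HasDerivAt
      (fun y : ℝ => ∑ i ∈ Finset.range (k+2), (-1:ℝ)^i * ((k+1).choose i) * (y - i)^(k+1))
      (∑ i ∈ Finset.range (k+2), (-1:ℝ)^i * ((k+1).choose i) * ((k+1) * (x - i)^k)) x := by
    apply HasDerivAt.fun_sum
    intro i _
    have h1 : HasDerivAt (fun y : ℝ => (y - (i:ℝ))^(k+1)) ((k+1) * (x - i)^k) x := by
      have := ((hasDerivAt_id x).sub_const (i:ℝ)).fun_pow (k+1)
      simpa using this
    simpa [mul_assoc] using h1.const_mul ((-1:ℝ)^i * ((k+1).choose i))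
  rw [hd.deriv]
  rw [Finset.sum_range_succ' _ (k+1)]
  have hterm : ∀ i ∈ Finset.range (k+1),
      (-1:ℝ)^(i+1) * (((k+1).choose (i+1) : ℕ) : ℝ) * ((k+1) * (x - ((i+1 : ℕ):ℝ))^k)
        = ((k+1) * ((-1:ℝ)^(i+1) * (k.choose (i+1)) * (x - ((i+1:ℕ):ℝ))^k))
          - (k+1) * ((-1:ℝ)^i * (k.choose i) * (x - 1 - i)^k) := by
    intro i _
    have hx : (x : ℝ) - ((i+1 : ℕ):ℝ) = x - 1 - i := by push_cast; ring
    rw [Nat.choose_succ_succ, hx]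
    push_cast
    ring
  rw [Finset.sum_congr rfl hterm, Finset.sum_sub_distrib, ← Finset.mul_sum, ← Finset.mul_sum]
  have hS1 : (∑ i ∈ Finset.range (k+1), (-1:ℝ)^(i+1) * (k.choose (i+1)) * (x - ((i+1:ℕ):ℝ))^k)
      = (∑ i ∈ Finset.range (k+1), (-1:ℝ)^i * (k.choose i) * (x - (i:ℝ))^k) - x^k := by
    rw [Finset.sum_range_succ _ k,
      Finset.sum_range_succ' (fun i => (-1:ℝ)^i * (k.choose i) * (x - (i:ℝ))^k) k]
    simp
  rw [hS1]
  simp only [Nat.choose_zero_right, Nat.cast_one, sub_zero, one_mul]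
  ring
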